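/- A set function R̂ is submodular if and only if its Lovasz extension R is convex. -/

import Mathlib

open Finset

noncomputable def sortedVal {n : ℕ} (f : Fin n → ℝ) : Fin n → ℝ := f ∘ Tuple.sort f

noncomputable def thresholdSet {n : ℕ} (f : Fin n → ℝ) (i : Fin n) : Finset (Fin n) :=
  Finset.univ.filter (fun j => sortedVal f i ≤ f j)

noncomputable def lovasz {n : ℕ} (R : Finset (Fin n) → ℝ) (f : Fin n → ℝ) : ℝ :=
  (∑ i : Fin n, if h : (i : ℕ) + 1 < n then
      R (thresholdSet f ⟨(i : ℕ) + 1, h⟩) * (sortedVal f ⟨(i : ℕ) + 1, h⟩ - sortedVal f i)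
    else 0)
  + R Finset.univ * (if h : 0 < n then sortedVal f ⟨0, h⟩ else 0)

def Submodular {α : Type*} [DecidableEq α] (R : Finset α → ℝ) : Prop :=
  ∀ A B : Finset α, R (A ∪ B) + R (A ∩ B) ≤ R A + R B

/-- upper set of a permutation -/
def upSet {n : ℕ} (σ : Equiv.Perm (Fin n)) (m : ℕ) : Finset (Fin n) :=
  Finset.univ.filter (fun j => m ≤ (σ.symm j : ℕ))

lemma mem_upSet {n : ℕ} {σ : Equiv.Perm (Fin n)} {m : ℕ} {j : Fin n} :
    j ∈ upSet σ m ↔ m ≤ (σ.symm j : ℕ) := by simp [upSet]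

lemma upSet_zero {n : ℕ} (σ : Equiv.Perm (Fin n)) : upSet σ 0 = univ := by
  simp [upSet]

lemma upSet_of_le {n : ℕ} (σ : Equiv.Perm (Fin n)) {m : ℕ} (h : n ≤ m) :
    upSet σ m = ∅ := by
  ext j; simp only [mem_upSet, Finset.notMem_empty, iff_false, not_le]
  exact lt_of_lt_of_le (σ.symm j).isLt h

lemma upSet_succ {n : ℕ} (σ : Equiv.Perm (Fin n)) {m : ℕ} (h : m < n) :
    upSet σ m = insert (σ ⟨m, h⟩) (upSet σ (m + 1)) := by
  ext j
  simp only [mem_upSet, Finset.mem_insert]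
  constructor
  · intro hm
    rcases eq_or_lt_of_le hm with he | hl
    · left
      rw [show (⟨m, h⟩ : Fin n) = σ.symm j from Fin.ext he]; simp
    · right; omega
  · rintro (rfl | hm)
    · simp
    · omega

lemma not_mem_upSet_succ {n : ℕ} (σ : Equiv.Perm (Fin n)) {m : ℕ} (h : m < n) :
    σ ⟨m, h⟩ ∉ upSet σ (m + 1) := by
  simp [mem_upSet]

/-- greedy weights -/
noncomputable def gw {n : ℕ} (R : Finset (Fin n) → ℝ) (σ : Equiv.Perm (Fin n)) (j : Fin n) : ℝ :=
  R (upSet σ (σ.symm j : ℕ)) - R (upSet σ ((σ.symm j : ℕ) + 1))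

lemma gw_apply {n : ℕ} (R : Finset (Fin n) → ℝ) (σ : Equiv.Perm (Fin n)) (m : ℕ) (h : m < n) :
    gw R σ (σ ⟨m, h⟩) = R (upSet σ m) - R (upSet σ (m + 1)) := by
  simp [gw]

/-- telescoping -/
lemma sum_gw_upSet {n : ℕ} (R : Finset (Fin n) → ℝ) (hR : R ∅ = 0) (σ : Equiv.Perm (Fin n)) :
    ∀ k m : ℕ, n ≤ m + k → ∑ j ∈ upSet σ m, gw R σ j = R (upSet σ m) := by
  intro k
  induction k with
  | zero => intro m hm; rw [upSet_of_le σ (by omega)]; simpa using hR.symm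
  | succ k ih =>
    intro m hm
    by_cases hlt : m < n
    · rw [upSet_succ σ hlt, Finset.sum_insert (not_mem_upSet_succ σ hlt),
        ih (m+1) (by omega), gw_apply, ← upSet_succ σ hlt]
      ring
    · rw [upSet_of_le σ (by omega)]; simpa using hR.symm

lemma sum_gw_univ {n : ℕ} (R : Finset (Fin n) → ℝ) (hR : R ∅ = 0) (σ : Equiv.Perm (Fin n)) :
    ∑ j, gw R σ j = R univ := by
  have := sum_gw_upSet R hR σ n 0 (by omega)
  rwa [upSet_zero] at this

/-- base polytope membership (greedy vector) -/
lemma sum_gw_inter_le {n : ℕ} (R : Finset (Fin n) → ℝ) (hR : R ∅ = 0)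
    (hsub : Submodular R) (σ : Equiv.Perm (Fin n)) (A : Finset (Fin n)) :
    ∀ k m : ℕ, n ≤ m + k → ∑ j ∈ A ∩ upSet σ m, gw R σ j ≤ R (A ∩ upSet σ m) := by
  intro k
  induction k with
  | zero =>
    intro m hm
    rw [upSet_of_le σ (by omega)]
    simp [hR]
  | succ k ih =>
    intro m hm
    by_cases hlt : m < n
    · set e := σ ⟨m, hlt⟩ with he
      by_cases heA : e ∈ A
      · have hdecomp : A ∩ upSet σ m = insert e (A ∩ upSet σ (m + 1)) := by
          ext j
          simp only [Finset.mem_inter, mem_upSet, Finset.mem_insert]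
          constructor
          · rintro ⟨hjA, hjm⟩
            rcases eq_or_lt_of_le hjm with heq | hlt'
            · left; rw [he, show (⟨m, hlt⟩ : Fin n) = σ.symm j from Fin.ext heq]; simp
            · right; exact ⟨hjA, by omega⟩
          · rintro (rfl | ⟨hjA, hjm⟩)
            · exact ⟨heA, by rw [he]; simp⟩
            · exact ⟨hjA, by omega⟩
        have hnm : e ∉ A ∩ upSet σ (m + 1) := fun hc =>
          not_mem_upSet_succ σ hlt (Finset.mem_of_mem_inter_right hc)
        have hsm := hsub (A ∩ upSet σ m) (upSet σ (m + 1))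
        have hu : (A ∩ upSet σ m) ∪ upSet σ (m + 1) = upSet σ m := by
          ext j
          simp only [Finset.mem_union, Finset.mem_inter, mem_upSet]
          constructor
          · rintro (⟨_, h1⟩ | h1) <;> omega
          · intro hjm
            rcases eq_or_lt_of_le hjm with heq | hlt'
            · left
              refine ⟨?_, hjm⟩
              have hje : j = e := by
                rw [he, show (⟨m, hlt⟩ : Fin n) = σ.symm j from Fin.ext heq]; simp
              rw [hje]; exact heA
            · right; omega
        have hi : (A ∩ upSet σ m) ∩ upSet σ (m + 1) = A ∩ upSet σ (m + 1) := by
          ext j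
          simp only [Finset.mem_inter, mem_upSet]
          constructor
          · rintro ⟨⟨h1, _⟩, h3⟩; exact ⟨h1, h3⟩
          · rintro ⟨h1, h3⟩; exact ⟨⟨h1, by omega⟩, h3⟩
        rw [hu, hi] at hsm
        have hIH := ih (m + 1) (by omega)
        have hgw : gw R σ e = R (upSet σ m) - R (upSet σ (m + 1)) := gw_apply R σ m hlt
        rw [hdecomp, Finset.sum_insert hnm, ← hdecomp]
        linarith
      · have hAe : A ∩ upSet σ m = A ∩ upSet σ (m + 1) := by
          ext j
          simp only [Finset.mem_inter, mem_upSet]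
          constructor
          · rintro ⟨h1, h2⟩
            refine ⟨h1, ?_⟩
            rcases eq_or_lt_of_le h2 with heq | hlt'
            · exfalso
              have hje : j = e := by
                rw [he, show (⟨m, hlt⟩ : Fin n) = σ.symm j from Fin.ext heq]; simp
              exact heA (hje ▸ h1)
            · omega
          · rintro ⟨h1, h2⟩; exact ⟨h1, by omega⟩
        rw [hAe]; exact ih (m + 1) (by omega)
    · rw [upSet_of_le σ (by omega)]
      simp [hR]

lemma sum_gw_le {n : ℕ} (R : Finset (Fin n) → ℝ) (hR : R ∅ = 0)
    (hsub : Submodular R) (σ : Equiv.Perm (Fin n)) (A : Finset (Fin n)) :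
    ∑ j ∈ A, gw R σ j ≤ R A := by
  have := sum_gw_inter_le R hR hsub σ A n 0 (by omega)
  rwa [upSet_zero, Finset.inter_univ] at this

lemma monotone_sortedVal {n : ℕ} (f : Fin n → ℝ) : Monotone (sortedVal f) :=
  Tuple.monotone_sort f

lemma sortedVal_symm {n : ℕ} (f : Fin n → ℝ) (j : Fin n) :
    f j = sortedVal f ((Tuple.sort f).symm j) := by
  simp [sortedVal]

/-- sum of greedy weights over a superlevel set -/
lemma sum_gw_levelSet {n : ℕ} (R : Finset (Fin n) → ℝ) (hR : R ∅ = 0)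
    (f : Fin n → ℝ) (t : ℝ) :
    ∑ j ∈ univ.filter (fun j => t ≤ f j), gw R (Tuple.sort f) j
      = R (univ.filter (fun j => t ≤ f j)) := by
  set σ := Tuple.sort f with hσ
  set S := univ.filter (fun j => t ≤ f j) with hSdef
  rcases S.eq_empty_or_nonempty with hS | hS
  · rw [hS]; simp [hR]
  · have hSim : (S.image (fun j => σ.symm j)).Nonempty := hS.image _
    set i₀ : Fin n := (S.image (fun j => σ.symm j)).min' hSim with hi₀
    obtain ⟨j₀, hj₀S, hj₀⟩ := Finset.mem_image.mp (Finset.min'_mem _ hSim)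
    have hkey : S = upSet σ (i₀ : ℕ) := by
      ext j
      rw [mem_upSet]
      constructor
      · intro hj
        exact Fin.le_def.mp (Finset.min'_le _ _ (Finset.mem_image_of_mem _ hj))
      · intro hj
        have h1 : t ≤ f j₀ := (Finset.mem_filter.mp hj₀S).2
        have h2 : f j₀ ≤ f j := by
          rw [sortedVal_symm f j₀, sortedVal_symm f j, hj₀, ← hσ]
          exact monotone_sortedVal f (Fin.le_def.mpr hj)
        simp only [hSdef, Finset.mem_filter, Finset.mem_univ, true_and]
        linarith
    rw [hkey, sum_gw_upSet R hR σ n _ (by omega)]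

/-- threshold sets are upper sets at strict jumps -/
lemma thresholdSet_eq_upSet {n : ℕ} (f : Fin n → ℝ) {a b : Fin n}
    (hlt : sortedVal f a < sortedVal f b) (hab : (a : ℕ) + 1 = (b : ℕ)) :
    thresholdSet f b = upSet (Tuple.sort f) (b : ℕ) := by
  set σ := Tuple.sort f with hσ
  ext j
  rw [mem_upSet]
  simp only [thresholdSet, Finset.mem_filter, Finset.mem_univ, true_and]
  constructor
  · intro hj
    by_contra hc
    push_neg at hc
    have h1 : σ.symm j ≤ a := by
      rw [Fin.le_def]; omega
    have h2 : f j ≤ sortedVal f a := by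
      rw [sortedVal_symm f j, ← hσ]
      exact monotone_sortedVal f h1
    linarith
  · intro hj
    rw [sortedVal_symm f j, ← hσ]
    exact monotone_sortedVal f (by rw [Fin.le_def]; omega)

lemma abel0 (a b : ℕ → ℝ) (n : ℕ) :
    ∑ i ∈ Finset.range (n+1), a i * b i
      = (∑ i ∈ Finset.range n, (∑ k ∈ Finset.Ico (i+1) (n+1), b k) * (a (i+1) - a i))
        + (∑ k ∈ Finset.range (n+1), b k) * a 0 := by
  induction n with
  | zero => simp [mul_comm]
  | succ n ih =>
    have hsplit : ∑ i ∈ Finset.range (n+1), (∑ k ∈ Finset.Ico (i+1) (n+2), b k) * (a (i+1) - a i)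
        = ∑ i ∈ Finset.range (n+1),
            ((∑ k ∈ Finset.Ico (i+1) (n+1), b k) * (a (i+1) - a i) + b (n+1) * (a (i+1) - a i)) := by
      refine Finset.sum_congr rfl fun i hi => ?_
      rw [Finset.sum_Ico_succ_top (by have := Finset.mem_range.mp hi; omega : i + 1 ≤ n + 1)]
      ring
    have htel : ∑ i ∈ Finset.range (n+1), (a (i+1) - a i) = a (n+1) - a 0 :=
      Finset.sum_range_sub a (n+1)
    rw [Finset.sum_range_succ (fun i => a i * b i) (n+1), ih, hsplit,
      Finset.sum_add_distrib, ← Finset.mul_sum, htel,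
      Finset.sum_range_succ (fun i => (∑ k ∈ Finset.Ico (i+1) (n+1), b k) * (a (i+1) - a i)) n,
      Finset.sum_range_succ b (n+1)]
    simp only [Finset.Ico_self, Finset.sum_empty, zero_mul]
    ring

lemma inner_eq {n : ℕ} (f v : Fin n → ℝ) :
    ∑ j, f j * v j
      = (∑ i : Fin n, if h : (i : ℕ) + 1 < n then
            (∑ j ∈ upSet (Tuple.sort f) ((i : ℕ) + 1), v j)
              * (sortedVal f ⟨(i : ℕ) + 1, h⟩ - sortedVal f i)
          else 0)
        + (∑ j, v j) * (if h : 0 < n then sortedVal f ⟨0, h⟩ else 0) := by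
  rcases Nat.eq_zero_or_pos n with rfl | hn
  · simp
  obtain ⟨m, rfl⟩ : ∃ m, n = m + 1 := ⟨n - 1, by omega⟩
  set σ := Tuple.sort f with hσ
  set a : ℕ → ℝ := fun i => if h : i < m + 1 then sortedVal f ⟨i, h⟩ else 0 with ha
  set b : ℕ → ℝ := fun i => if h : i < m + 1 then v (σ ⟨i, h⟩) else 0 with hb
  have hup : ∀ p : ℕ, ∑ j ∈ upSet σ p, v j = ∑ k ∈ Finset.Ico p (m + 1), b k := by
    intro p
    rw [show Finset.Ico p (m+1) = (Finset.range (m+1)).filter (fun k => p ≤ k) by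
      ext k; simp only [Finset.mem_Ico, Finset.mem_filter, Finset.mem_range]; omega]
    rw [Finset.sum_filter, ← Fin.sum_univ_eq_sum_range (fun k => if p ≤ k then b k else 0) (m+1)]
    rw [show (∑ j ∈ upSet σ p, v j)
        = ∑ j : Fin (m+1), if p ≤ ((σ.symm j : Fin (m+1)) : ℕ) then v j else 0 by
      rw [upSet, Finset.sum_filter]]
    rw [← Equiv.sum_comp σ (fun j => if p ≤ ((σ.symm j : Fin (m+1)) : ℕ) then v j else 0)]
    refine Finset.sum_congr rfl fun i _ => ?_
    simp [hb, i.isLt, Nat.le_of_lt_succ i.isLt]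
  have hlhs : ∑ j, f j * v j = ∑ i ∈ Finset.range (m+1), a i * b i := by
    rw [← Fin.sum_univ_eq_sum_range (fun i => a i * b i) (m+1),
      ← Equiv.sum_comp σ (fun j => f j * v j)]
    refine Finset.sum_congr rfl fun i _ => ?_
    simp [ha, hb, i.isLt, Nat.le_of_lt_succ i.isLt, sortedVal, ← hσ]
  have hmid : (∑ i : Fin (m+1), if h : (i : ℕ) + 1 < m + 1 then
        (∑ j ∈ upSet σ ((i : ℕ) + 1), v j)
          * (sortedVal f ⟨(i : ℕ) + 1, h⟩ - sortedVal f i) else 0)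
      = ∑ i ∈ Finset.range m, (∑ k ∈ Finset.Ico (i+1) (m+1), b k) * (a (i+1) - a i) := by
    have h1 : (∑ i : Fin (m+1), if h : (i : ℕ) + 1 < m + 1 then
          (∑ j ∈ upSet σ ((i : ℕ) + 1), v j)
            * (sortedVal f ⟨(i : ℕ) + 1, h⟩ - sortedVal f i) else 0)
        = ∑ i : Fin (m+1), (fun i : ℕ => if i + 1 < m + 1 then
            (∑ k ∈ Finset.Ico (i+1) (m+1), b k) * (a (i+1) - a i) else 0) (i : ℕ) := by
      refine Finset.sum_congr rfl fun i _ => ?_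
      by_cases h : (i : ℕ) + 1 < m + 1
      · simp only [dif_pos h, if_pos h, hup ((i : ℕ) + 1), ha]
        rw [dif_pos i.isLt]
      · simp [h]
    rw [h1, Fin.sum_univ_eq_sum_range (fun i : ℕ => if i + 1 < m + 1 then
        (∑ k ∈ Finset.Ico (i+1) (m+1), b k) * (a (i+1) - a i) else 0) (m+1),
      Finset.sum_range_succ]
    rw [if_neg (lt_irrefl (m+1)), add_zero]
    refine Finset.sum_congr rfl fun i hi => ?_
    rw [if_pos (by have := Finset.mem_range.mp hi; omega)]
  have hlast : (∑ j, v j) * (if h : 0 < m + 1 then sortedVal f ⟨0, h⟩ else 0)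
      = (∑ k ∈ Finset.range (m+1), b k) * a 0 := by
    have h2 : ∑ j, v j = ∑ k ∈ Finset.range (m+1), b k := by
      rw [Finset.range_eq_Ico, ← hup 0, upSet_zero]
    rw [h2, ha]
  rw [hlhs, abel0 a b m, hmid, hlast]

lemma lovasz_eq_inner {n : ℕ} (R : Finset (Fin n) → ℝ) (hR : R ∅ = 0) (f : Fin n → ℝ) :
    lovasz R f = ∑ j, f j * gw R (Tuple.sort f) j := by
  rw [inner_eq f (gw R (Tuple.sort f)), lovasz, sum_gw_univ R hR]
  congr 1
  refine Finset.sum_congr rfl fun i _ => ?_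
  by_cases h : (i : ℕ) + 1 < n
  · rw [dif_pos h, dif_pos h, sum_gw_upSet R hR (Tuple.sort f) n ((i:ℕ)+1) (by omega)]
    have hle : sortedVal f i ≤ sortedVal f ⟨(i:ℕ)+1, h⟩ :=
      monotone_sortedVal f (by rw [Fin.le_def]; simp)
    rcases eq_or_lt_of_le hle with heq | hlt
    · rw [← heq]; ring
    · rw [thresholdSet_eq_upSet f hlt rfl]
  · rw [dif_neg h, dif_neg h]

lemma inner_le_lovasz {n : ℕ} (R : Finset (Fin n) → ℝ) (hR : R ∅ = 0)
    (hsub : Submodular R) (τ : Equiv.Perm (Fin n)) (f : Fin n → ℝ) :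
    ∑ j, f j * gw R τ j ≤ lovasz R f := by
  rw [inner_eq f (gw R τ), lovasz, sum_gw_univ R hR]
  refine add_le_add ?_ le_rfl
  refine Finset.sum_le_sum fun i _ => ?_
  by_cases h : (i : ℕ) + 1 < n
  · rw [dif_pos h, dif_pos h]
    have hle : sortedVal f i ≤ sortedVal f ⟨(i:ℕ)+1, h⟩ :=
      monotone_sortedVal f (by rw [Fin.le_def]; simp)
    rcases eq_or_lt_of_le hle with heq | hlt
    · rw [← heq]; simp
    · rw [thresholdSet_eq_upSet f hlt rfl]
      exact mul_le_mul_of_nonneg_right (sum_gw_le R hR hsub τ _) (by linarith)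
  · rw [dif_neg h, dif_neg h]

theorem submodular_iff_lovasz_convex' {n : ℕ} (R : Finset (Fin n) → ℝ) (hR : R ∅ = 0) :
    Submodular R ↔ ConvexOn ℝ Set.univ (lovasz R) := by
  constructor
  · intro hsub
    refine ⟨convex_univ, ?_⟩
    intro x _ y _ a b ha hb hab
    set z := a • x + b • y with hz
    have h1 : lovasz R z = ∑ j, z j * gw R (Tuple.sort z) j := lovasz_eq_inner R hR z
    have h2 : ∑ j, z j * gw R (Tuple.sort z) j
        = a * ∑ j, x j * gw R (Tuple.sort z) j + b * ∑ j, y j * gw R (Tuple.sort z) j := by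
      rw [Finset.mul_sum, Finset.mul_sum, ← Finset.sum_add_distrib]
      refine Finset.sum_congr rfl fun j _ => ?_
      simp only [hz, Pi.add_apply, Pi.smul_apply, smul_eq_mul]
      ring
    have h3 := inner_le_lovasz R hR hsub (Tuple.sort z) x
    have h4 := inner_le_lovasz R hR hsub (Tuple.sort z) y
    have h5 := mul_le_mul_of_nonneg_left h3 ha
    have h6 := mul_le_mul_of_nonneg_left h4 hb
    simp only [smul_eq_mul]
    rw [h1, h2]
    linarith
  · intro hconv A B
    classical
    set x : Fin n → ℝ := fun j => if j ∈ A then 1 else 0 with hx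
    set y : Fin n → ℝ := fun j => if j ∈ B then 1 else 0 with hy
    have hsum : ∀ (C : Finset (Fin n)) (w : Fin n → ℝ),
        ∑ j, (if j ∈ C then (1:ℝ) else 0) * w j = ∑ j ∈ C, w j := by
      intro C w
      rw [← Finset.univ_inter C, ← Finset.sum_ite_mem]
      refine Finset.sum_congr rfl fun j _ => ?_
      by_cases hj : j ∈ C <;> simp [hj]
    have key : ∀ (C : Finset (Fin n)) (g : Fin n → ℝ) (t : ℝ),
        C = univ.filter (fun j => t ≤ g j) →
        ∑ j ∈ C, gw R (Tuple.sort g) j = R C := by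
      intro C g t hC
      rw [hC]
      exact sum_gw_levelSet R hR g t
    have hLx : lovasz R x = R A := by
      rw [lovasz_eq_inner R hR x, hsum A (gw R (Tuple.sort x))]
      refine key A x 1 ?_
      ext j
      by_cases hj : j ∈ A <;> simp [hx, hj]
    have hLy : lovasz R y = R B := by
      rw [lovasz_eq_inner R hR y, hsum B (gw R (Tuple.sort y))]
      refine key B y 1 ?_
      ext j
      by_cases hj : j ∈ B <;> simp [hy, hj]
    set h : Fin n → ℝ := (1/2 : ℝ) • x + (1/2 : ℝ) • y with hh
    have hLh : lovasz R h = (R (A ∪ B) + R (A ∩ B)) / 2 := by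
      rw [lovasz_eq_inner R hR h]
      set w := gw R (Tuple.sort h) with hw
      have e1 : ∑ j, h j * w j = (1/2) * ∑ j, x j * w j + (1/2) * ∑ j, y j * w j := by
        rw [Finset.mul_sum, Finset.mul_sum, ← Finset.sum_add_distrib]
        refine Finset.sum_congr rfl fun j _ => ?_
        simp only [hh, Pi.add_apply, Pi.smul_apply, smul_eq_mul]
        ring
      have e2 : ∑ j, x j * w j = ∑ j ∈ A, w j := hsum A w
      have e3 : ∑ j, y j * w j = ∑ j ∈ B, w j := hsum B w
      have e4 : ∑ j ∈ A ∪ B, w j + ∑ j ∈ A ∩ B, w j = ∑ j ∈ A, w j + ∑ j ∈ B, w j :=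
        Finset.sum_union_inter
      have e5 : ∑ j ∈ A ∪ B, w j = R (A ∪ B) := by
        refine key (A ∪ B) h (1/2) ?_
        ext j
        by_cases hjA : j ∈ A <;> by_cases hjB : j ∈ B <;>
          simp [hh, hx, hy, hjA, hjB]
      have e6 : ∑ j ∈ A ∩ B, w j = R (A ∩ B) := by
        refine key (A ∩ B) h 1 ?_
        ext j
        by_cases hjA : j ∈ A <;> by_cases hjB : j ∈ B <;>
          simp [hh, hx, hy, hjA, hjB] <;> norm_num
      rw [e1, e2, e3]
      linarith
    have hcv := hconv.2 (Set.mem_univ x) (Set.mem_univ y)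
      (by norm_num : (0:ℝ) ≤ 1/2) (by norm_num : (0:ℝ) ≤ 1/2) (by norm_num)
    rw [← hh] at hcv
    rw [hLh, hLx, hLy] at hcv
    simp only [smul_eq_mul] at hcv
    linarith

/-- a set function is submodular iff its Lovász extension is convex. -/
theorem submodular_iff_lovasz_convex {n : ℕ} (R : Finset (Fin n) → ℝ) (hR : R ∅ = 0) :
    Submodular R ↔ ConvexOn ℝ Set.univ (lovasz R) := by
  exact submodular_iff_lovasz_convex' R hR
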